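/- For all n ≥ 1 and r ≥ 1, the cube of the 3-norm of the (n,r)-Fibonacci vector q_{n,r} = (F_{n+1}, …, F_{n+r}) satisfies ∑_{i=n+1}^{n+r} F_i^3 = (1/2)(F_{n+r} · F_{n+r+1}^2 + (−1)^{n+r+1} · F_{n+r−1}) − (1/2)(F_n · F_{n+1}^2 + (−1)^{n+1} · F_{n−1}). -/

import Mathlib

private lemma fib_cassini (k : ℕ) :
    (Nat.fib k : ℝ) * Nat.fib (k + 2) - (Nat.fib (k + 1) : ℝ) ^ 2 = (-1) ^ (k + 1) := by
  induction k with
  | zero => simp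
  | succ k ih =>
    have h2 : (Nat.fib (k + 2) : ℝ) = Nat.fib (k + 1) + Nat.fib k := by
      rw [Nat.fib_add_two]; push_cast; ring
    have h1 : (Nat.fib (k + 3) : ℝ) = Nat.fib (k + 2) + Nat.fib (k + 1) := by
      rw [show k + 3 = (k + 1) + 2 from rfl, Nat.fib_add_two]; push_cast; ring
    rw [show k + 1 + 2 = k + 3 from rfl, show k + 1 + 1 = k + 2 from rfl, h1, h2]
    rw [h2] at ih
    linear_combination (-1 : ℝ) * ih

private lemma fib_step (m : ℕ) (hm : 1 ≤ m) :
    (1 / 2) * ((Nat.fib (m + 1) : ℝ) * (Nat.fib (m + 2) : ℝ) ^ 2 +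
        (-1 : ℝ) ^ (m + 2) * (Nat.fib m : ℝ)) -
      (1 / 2) * ((Nat.fib m : ℝ) * (Nat.fib (m + 1) : ℝ) ^ 2 +
        (-1 : ℝ) ^ (m + 1) * (Nat.fib (m - 1) : ℝ)) = (Nat.fib (m + 1) : ℝ) ^ 3 := by
  obtain ⟨k, rfl⟩ := Nat.exists_eq_add_of_le hm
  rw [show 1 + k = k + 1 by ring] at *
  simp only [Nat.add_sub_cancel]
  have hc := fib_cassini k
  have h2 : (Nat.fib (k + 2) : ℝ) = Nat.fib (k + 1) + Nat.fib k := by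
    rw [Nat.fib_add_two]; push_cast; ring
  have h3 : (Nat.fib (k + 3) : ℝ) = Nat.fib (k + 2) + Nat.fib (k + 1) := by
    rw [show k + 3 = (k + 1) + 2 from rfl, Nat.fib_add_two]; push_cast; ring
  rw [show k + 1 + 2 = k + 3 from rfl, show k + 1 + 1 = k + 2 from rfl, h3, h2]
  rw [h2] at hc
  linear_combination (-(1 / 2) * ((Nat.fib k : ℝ) + (Nat.fib (k + 1) : ℝ))) * hc

/-- For `n ≥ 1` and `r ≥ 1`,
`∑_{i=n+1}^{n+r} (F i)^3
  = (1/2)*(F (n+r) * (F (n+r+1))^2 + (-1)^(n+r+1) * F (n+r-1))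
    - (1/2)*(F n * (F (n+1))^2 + (-1)^(n+1) * F (n-1))`. -/
theorem fib_vec_threenorm_cube (n r : ℕ) (hn : 1 ≤ n) (hr : 1 ≤ r) :
    ∑ i ∈ Finset.Icc (n + 1) (n + r), (Nat.fib i : ℝ) ^ 3 =
      (1 / 2) * ((Nat.fib (n + r) : ℝ) * (Nat.fib (n + r + 1) : ℝ) ^ 2 +
          (-1 : ℝ) ^ (n + r + 1) * (Nat.fib (n + r - 1) : ℝ)) -
      (1 / 2) * ((Nat.fib n : ℝ) * (Nat.fib (n + 1) : ℝ) ^ 2 +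
          (-1 : ℝ) ^ (n + 1) * (Nat.fib (n - 1) : ℝ)) := by
  induction r with
  | zero => omega
  | succ r ih =>
    rcases Nat.eq_zero_or_pos r with rfl | hr'
    · rw [Finset.Icc_self, Finset.sum_singleton]
      have key := fib_step n hn
      simp only [show n + 1 + 1 = n + 2 from rfl, Nat.add_sub_cancel] at *
      linarith [key]
    · have key := fib_step (n + r) (by omega)
      rw [show n + (r + 1) = (n + r) + 1 from rfl,
        Finset.sum_Icc_succ_top (by omega : n + 1 ≤ n + r + 1)]
      rw [ih hr']
      rw [show n + r + 1 - 1 = n + r by omega,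
        show n + r + 1 + 1 = n + r + 2 from rfl]
      linarith [key]
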